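/- Let L be the linear operator on the space of polynomials (over the rationals, say) spanned by the monomials x^j, j ≥ 1, determined by L(x^j) = (x^{2j-1} + 2x^{2j} + x^{2j+1})/4 for every j ≥ 1. Then for every integer i ≥ 0, the i-fold iterate satisfies L^i(x) = 4^{-i} ( Σ_{j=1}^{2^i} j·x^j + Σ_{j=2^i+1}^{2^{i+1}-1} (2^{i+1} - j)·x^j ). -/

import Mathlib

open Polynomial
open Finset

lemma parity_split {β : Type*} [AddCommMonoid β] (f : ℕ → β) (M : ℕ) :
    ∑ k ∈ Finset.range (2*M), f k
      = ∑ j ∈ Finset.range M, f (2*j) + ∑ j ∈ Finset.range M, f (2*j+1) := by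
  induction M with
  | zero => simp
  | succ n ih =>
    have h2 : 2 * (n+1) = (2*n + 1) + 1 := by ring
    rw [h2, Finset.sum_range_succ, Finset.sum_range_succ, Finset.sum_range_succ,
      Finset.sum_range_succ, ih]
    abel

lemma shift_sum (c : ℕ → ℕ) (n : ℕ) (h0 : c 0 = 0) (hn : c n = 0) :
    ∑ j ∈ Finset.range n, C ((c (j+1) : ℚ)) * X ^ (2*j+1)
      = ∑ j ∈ Finset.range n, C ((c j : ℚ)) * X ^ (2*j-1) := by
  have key := Finset.sum_range_succ' (fun j => C ((c j : ℚ)) * X ^ (2*j-1)) n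
  rw [Finset.sum_range_succ] at key
  simp only [h0, hn, Nat.cast_zero, map_zero, zero_mul, add_zero] at key
  have : ∀ j, C ((c (j+1) : ℚ)) * X ^ (2*(j+1)-1) = C ((c (j+1) : ℚ)) * (X:ℚ[X]) ^ (2*j+1) := by
    intro j
    have e : 2*(j+1)-1 = 2*j+1 := by omega
    rw [e]
  rw [key]
  exact Finset.sum_congr rfl fun j _ => (this j).symm

lemma key_tent (M : ℕ) :
    ∑ j ∈ Finset.range (2*M), C ((min j (2*M - j) : ℕ) : ℚ) *
        (X ^ (2*j-1) + 2 * X ^ (2*j) + X ^ (2*j+1))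
      = ∑ k ∈ Finset.range (2*(2*M)), C ((min k (2*(2*M) - k) : ℕ) : ℚ) * X ^ k := by
  rw [parity_split (fun k => C ((min k (2*(2*M) - k) : ℕ) : ℚ) * X ^ k)]
  have heven : ∑ j ∈ range (2*M), C ((min (2*j) (2*(2*M) - 2*j) : ℕ) : ℚ) * (X:ℚ[X]) ^ (2*j)
      = ∑ j ∈ range (2*M), C ((min j (2*M - j) : ℕ) : ℚ) * (2 * X ^ (2*j)) := by
    refine Finset.sum_congr rfl fun j _ => ?_
    have h : min (2*j) (2*(2*M) - 2*j) = 2 * min j (2*M - j) := by omega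
    rw [h, Nat.cast_mul, map_mul, Nat.cast_ofNat, map_ofNat]; ring
  have hodd : ∑ j ∈ range (2*M), C ((min (2*j+1) (2*(2*M) - (2*j+1)) : ℕ) : ℚ) * (X:ℚ[X]) ^ (2*j+1)
      = ∑ j ∈ range (2*M), (C ((min j (2*M-j) : ℕ) : ℚ) * X ^ (2*j+1)
          + C ((min (j+1) (2*M-(j+1)) : ℕ) : ℚ) * X ^ (2*j+1)) := by
    refine Finset.sum_congr rfl fun j _ => ?_
    have h : min (2*j+1) (2*(2*M) - (2*j+1)) = min j (2*M-j) + min (j+1) (2*M-(j+1)) := by omega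
    rw [h, Nat.cast_add, map_add]; ring
  rw [heven, hodd, Finset.sum_add_distrib]
  rw [shift_sum (fun j => min j (2*M - j)) (2*M) (by simp) (by simp)]
  simp only [mul_add]
  rw [Finset.sum_add_distrib, Finset.sum_add_distrib]
  abel

lemma main_lemma (L : Module.End ℚ (Polynomial ℚ))
    (hL : ∀ j : ℕ, 1 ≤ j →
      L (X ^ j) = C (1/4 : ℚ) * (X ^ (2*j - 1) + 2 * X ^ (2*j) + X ^ (2*j + 1))) :
    ∀ i : ℕ, (L ^ i) X =
      C ((1/4 : ℚ) ^ i) * ∑ k ∈ Finset.range (2^(i+1)),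
        C ((min k (2^(i+1) - k) : ℕ) : ℚ) * X ^ k := by
  intro i
  induction i with
  | zero => simp [Finset.sum_range_succ]
  | succ i ih =>
    have hpow : (L ^ (i+1)) X = L ((L ^ i) X) := by
      rw [pow_succ', Module.End.mul_apply]
    rw [hpow, ih, ← smul_eq_C_mul, map_smul, map_sum]
    have hterm : ∀ k ∈ Finset.range (2^(i+1)),
        L (C ((min k (2^(i+1) - k) : ℕ) : ℚ) * X ^ k)
          = C ((min k (2^(i+1) - k) : ℕ) : ℚ) *
              (C (1/4 : ℚ) * (X ^ (2*k - 1) + 2 * X ^ (2*k) + X ^ (2*k + 1))) := by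
      intro k _
      rcases Nat.eq_zero_or_pos k with hk | hk
      · subst hk; simp
      · rw [← smul_eq_C_mul, map_smul, hL k hk, smul_eq_C_mul]
    rw [Finset.sum_congr rfl hterm]
    have pull : ∑ k ∈ Finset.range (2^(i+1)),
        C ((min k (2^(i+1) - k) : ℕ) : ℚ) *
          (C (1/4 : ℚ) * (X ^ (2*k - 1) + 2 * X ^ (2*k) + X ^ (2*k + 1)))
        = C (1/4 : ℚ) * ∑ k ∈ Finset.range (2^(i+1)),
            C ((min k (2^(i+1) - k) : ℕ) : ℚ) *
              (X ^ (2*k - 1) + 2 * X ^ (2*k) + X ^ (2*k + 1)) := by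
      rw [Finset.mul_sum]
      exact Finset.sum_congr rfl fun k _ => by ring
    rw [pull]
    have e1 : (2:ℕ)^(i+1) = 2 * 2^i := by ring
    have e2 : (2:ℕ)^(i+1+1) = 2 * (2 * 2^i) := by ring
    rw [e1, key_tent (2^i), ← e2, smul_eq_C_mul, ← mul_assoc, ← map_mul]
    congr 2
    rw [pow_succ]

/-- If `L` is the linear operator on polynomials (over `ℚ`) determined on
monomials by `L(x^j) = (x^{2j-1} + 2x^{2j} + x^{2j+1})/4` for `j ≥ 1`, then for every `i ≥ 0`,
`L^i(x) = 4^{-i} (Σ_{j=1}^{2^i} j x^j + Σ_{j=2^i+1}^{2^{i+1}-1} (2^{i+1}-j) x^j)`. -/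
theorem stmt0 (L : Module.End ℚ (Polynomial ℚ))
    (hL : ∀ j : ℕ, 1 ≤ j →
      L (X ^ j) = C (1/4 : ℚ) * (X ^ (2*j - 1) + 2 * X ^ (2*j) + X ^ (2*j + 1))) :
    ∀ i : ℕ, (L ^ i) X =
      C ((1/4 : ℚ) ^ i) *
        ((∑ j ∈ Finset.Icc (1:ℕ) (2 ^ i), (j : Polynomial ℚ) * X ^ j) +
          ∑ j ∈ Finset.Icc (2 ^ i + 1 : ℕ) (2 ^ (i + 1) - 1),
            ((2 ^ (i + 1) - j : ℕ) : Polynomial ℚ) * X ^ j) := by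
  intro i
  rw [main_lemma L hL i]
  congr 1
  have hpos : 0 < (2:ℕ)^i := Nat.pow_pos (by norm_num)
  have hdbl : (2:ℕ)^(i+1) = 2 * 2^i := by ring
  rw [Finset.range_eq_Ico, ← Finset.sum_Ico_consecutive _ (Nat.zero_le (2^i+1)) (by omega)]
  have h1 : ∑ k ∈ Finset.Ico 0 (2^i+1), C ((min k (2^(i+1) - k) : ℕ) : ℚ) * X ^ k
      = ∑ j ∈ Finset.Icc (1:ℕ) (2^i), (j : Polynomial ℚ) * X ^ j := by
    rw [Finset.sum_eq_sum_Ico_succ_bot (by omega), Finset.Ico_add_one_right_eq_Icc,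
      show (min 0 (2^(i+1) - 0) : ℕ) = 0 from by omega]
    simp only [Nat.cast_zero, map_zero, zero_mul, zero_add]
    refine Finset.sum_congr rfl fun j hj => ?_
    simp only [Finset.mem_Icc] at hj
    rw [show min j (2^(i+1) - j) = j by omega, C_eq_natCast]
  have h2 : ∑ k ∈ Finset.Ico (2^i+1) (2^(i+1)), C ((min k (2^(i+1) - k) : ℕ) : ℚ) * X ^ k
      = ∑ j ∈ Finset.Icc (2^i+1 : ℕ) (2^(i+1)-1),
          ((2^(i+1) - j : ℕ) : Polynomial ℚ) * X ^ j := by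
    have hIco : Finset.Ico (2^i+1) (2^(i+1)) = Finset.Icc (2^i+1 : ℕ) (2^(i+1)-1) := by
      rw [← Finset.Ico_add_one_right_eq_Icc]
      congr 1
      omega
    rw [hIco]
    refine Finset.sum_congr rfl fun j hj => ?_
    simp only [Finset.mem_Icc] at hj
    rw [show min j (2^(i+1) - j) = 2^(i+1) - j by omega, C_eq_natCast]
  rw [h1, h2]
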